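/- Let F be a field of characteristic ≠ 2 and V an infinite-dimensional vector space over F with a nondegenerate quadratic form Q. Then for every element x of the Clifford algebra Cl(V,Q) there exists a finite-dimensional, even-dimensional, nondegenerate subspace V' ⊆ V such that x lies in the unital subalgebra of Cl(V,Q) generated by ι(V'). -/

import Mathlib

open Module QuadraticMap

section Aux

variable {F V : Type*} [Field F] [AddCommGroup V] [Module F V]

private lemma polar_mem_orth_iff (Q : QuadraticForm F V) (U : Submodule F V) (x : V) :
    x ∈ LinearMap.BilinForm.orthogonal Q.polarBilin U ↔ ∀ n ∈ U, QuadraticMap.polar Q n x = 0 := Iff.rfl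

/-- Extend a finite-dimensional subspace to one on which the polar form is nondegenerate. -/
private lemma extend_nondeg (Q : QuadraticForm F V)
    (hQ : ∀ v : V, (∀ w : V, QuadraticMap.polar Q v w = 0) → v = 0) :
    ∀ (n : ℕ) (U : Submodule F V), FiniteDimensional F U →
      finrank F ↥(U ⊓ LinearMap.BilinForm.orthogonal Q.polarBilin U) = n →
      ∃ U' : Submodule F V, U ≤ U' ∧ FiniteDimensional F U' ∧
        (∀ u ∈ U', (∀ w ∈ U', QuadraticMap.polar Q u w = 0) → u = 0) := by
  intro n
  induction n using Nat.strong_induction_on with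
  | _ n ih =>
    intro U hU hrank
    haveI := hU
    haveI : FiniteDimensional F ↥(U ⊓ LinearMap.BilinForm.orthogonal Q.polarBilin U) :=
      Submodule.finiteDimensional_of_le inf_le_left
    rcases Nat.eq_zero_or_pos n with h0 | hpos
    · -- radical is trivial: U itself works
      rw [h0] at hrank
      have hbot : U ⊓ LinearMap.BilinForm.orthogonal Q.polarBilin U = ⊥ := Submodule.finrank_eq_zero.mp hrank
      refine ⟨U, le_rfl, hU, fun u hu hw => ?_⟩
      have : u ∈ U ⊓ LinearMap.BilinForm.orthogonal Q.polarBilin U := by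
        refine ⟨hu, fun v hv => ?_⟩
        show QuadraticMap.polar Q v u = 0
        rw [QuadraticMap.polar_comm]
        exact hw v hv
      rw [hbot] at this
      exact this
    · -- radical is nontrivial: enlarge U, shrinking the radical
      have hne : U ⊓ LinearMap.BilinForm.orthogonal Q.polarBilin U ≠ ⊥ := by
        intro h
        rw [h, finrank_bot] at hrank
        omega
      obtain ⟨u, hu_mem, hu_ne⟩ := Submodule.exists_mem_ne_zero_of_ne_bot hne
      have : ¬ ∀ w : V, QuadraticMap.polar Q u w = 0 := fun h => hu_ne (hQ u h)
      push_neg at this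
      obtain ⟨w, hw⟩ := this
      set W : Submodule F V := U ⊔ (F ∙ w) with hW
      haveI : FiniteDimensional F W := Submodule.finiteDimensional_sup _ _
      have hle : W ⊓ LinearMap.BilinForm.orthogonal Q.polarBilin W ≤ U ⊓ LinearMap.BilinForm.orthogonal Q.polarBilin U := by
        rintro x ⟨hxW, hxO⟩
        obtain ⟨y, hy, z, hz, rfl⟩ := Submodule.mem_sup.mp hxW
        obtain ⟨c, rfl⟩ := Submodule.mem_span_singleton.mp hz
        rw [hW] at hxO
        have hux : QuadraticMap.polar Q u (y + c • w) = 0 :=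
          hxO u (Submodule.mem_sup_left hu_mem.1)
        have huy : QuadraticMap.polar Q u y = 0 := by
          rw [QuadraticMap.polar_comm]
          exact hu_mem.2 y hy
        rw [QuadraticMap.polar_add_right, huy, QuadraticMap.polar_smul_right, zero_add,
          smul_eq_mul] at hux
        have hc : c = 0 := by
          rcases mul_eq_zero.mp hux with h | h
          · exact h
          · exact absurd h hw
        have hx' : y + c • w = y := by rw [hc, zero_smul, add_zero]
        rw [hx'] at hxO ⊢
        exact ⟨hy, LinearMap.BilinForm.orthogonal_le le_sup_left hxO⟩
      have hmem_ne : u ∉ W ⊓ LinearMap.BilinForm.orthogonal Q.polarBilin W := by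
        rintro ⟨-, hO⟩
        have hwW : w ∈ W := Submodule.mem_sup_right (Submodule.mem_span_singleton_self w)
        have : QuadraticMap.polar Q w u = 0 := hO w hwW
        rw [QuadraticMap.polar_comm] at this
        exact hw this
      have hlt : W ⊓ LinearMap.BilinForm.orthogonal Q.polarBilin W < U ⊓ LinearMap.BilinForm.orthogonal Q.polarBilin U :=
        lt_of_le_of_ne hle (fun heq => hmem_ne (heq ▸ hu_mem))
      have hrk : finrank F ↥(W ⊓ LinearMap.BilinForm.orthogonal Q.polarBilin W) < n := by
        rw [← hrank]
        exact Submodule.finrank_lt_finrank_of_lt hlt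
      obtain ⟨U', hWU', hU'fin, hU'nd⟩ := ih _ hrk W inferInstance rfl
      exact ⟨U', le_trans le_sup_left hWU', hU'fin, hU'nd⟩

/-- If the polar form is nondegenerate on a finite-dimensional `U`, then
`U ⊔ U^⊥ = ⊤`. -/
private lemma sup_orth_eq_top (Q : QuadraticForm F V) (U : Submodule F V)
    (hU : FiniteDimensional F U)
    (hnd : ∀ u ∈ U, (∀ w ∈ U, QuadraticMap.polar Q u w = 0) → u = 0) :
    U ⊔ LinearMap.BilinForm.orthogonal Q.polarBilin U = ⊤ := by
  haveI := hU
  have hnd' : (LinearMap.BilinForm.restrict Q.polarBilin U).Nondegenerate := by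
    refine (LinearMap.IsRefl.nondegenerate_iff_separatingLeft ?_).mpr ?_
    · intro a b hab; simpa [QuadraticMap.polar_comm] using hab
    intro x h
    have : (x : V) = 0 := by
      refine hnd x x.2 (fun ww hww => ?_)
      have := h ⟨ww, hww⟩
      simpa using this
    exact Subtype.ext this
  rw [eq_top_iff]
  intro v _
  -- find `u0 ∈ U` representing the functional `u ↦ polar Q u v` on `U`
  set f : Module.Dual F ↥U :=
    (((Q.polarBilin).flip v).comp U.subtype) with hf
  set u0 : ↥U := ((LinearMap.BilinForm.restrict Q.polarBilin U).toDual hnd').symm f with hu0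
  have key : ∀ u : ↥U, QuadraticMap.polar Q (u0 : V) (u : V) = QuadraticMap.polar Q (u : V) v := by
    intro u
    have h := LinearMap.BilinForm.apply_toDual_symm_apply
      (B := LinearMap.BilinForm.restrict Q.polarBilin U) (hB := hnd') f u
    exact h
  have hmem : v - (u0 : V) ∈ LinearMap.BilinForm.orthogonal Q.polarBilin U := by
    intro n hn
    show QuadraticMap.polar Q n (v - (u0 : V)) = 0
    rw [QuadraticMap.polar_sub_right]
    have h1 : QuadraticMap.polar Q n (u0 : V) = QuadraticMap.polar Q n v := by
      rw [QuadraticMap.polar_comm]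
      exact key ⟨n, hn⟩
    rw [h1, sub_self]
  exact Submodule.mem_sup.mpr ⟨(u0 : V), u0.2, v - (u0 : V), hmem, by abel⟩

/-- Extend a finite-dimensional subspace to an even-dimensional nondegenerate one. -/
private lemma extend_even_nondeg (hchar : (2 : F) ≠ 0) (hV : ¬ FiniteDimensional F V)
    (Q : QuadraticForm F V)
    (hQ : ∀ v : V, (∀ w : V, QuadraticMap.polar Q v w = 0) → v = 0)
    (U : Submodule F V) (hU : FiniteDimensional F U) :
    ∃ U' : Submodule F V, U ≤ U' ∧ FiniteDimensional F U' ∧ Even (finrank F U') ∧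
      (∀ u ∈ U', (∀ w ∈ U', QuadraticMap.polar Q u w = 0) → u = 0) := by
  obtain ⟨U1, hUU1, hU1fin, hU1nd⟩ := extend_nondeg Q hQ _ U hU rfl
  haveI := hU1fin
  by_cases he : Even (finrank F U1)
  · exact ⟨U1, hUU1, hU1fin, he, hU1nd⟩
  · -- pick an anisotropic vector in the orthogonal complement
    have hsup := sup_orth_eq_top Q U1 hU1fin hU1nd
    have hex : ∃ w ∈ LinearMap.BilinForm.orthogonal Q.polarBilin U1, QuadraticMap.polar Q w w ≠ 0 := by
      by_contra h
      push_neg at h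
      have horth : ∀ w1 ∈ LinearMap.BilinForm.orthogonal Q.polarBilin U1, ∀ w2 ∈ LinearMap.BilinForm.orthogonal Q.polarBilin U1,
          QuadraticMap.polar Q w1 w2 = 0 := by
        intro w1 h1 w2 h2
        have hs := h (w1 + w2) (Submodule.add_mem _ h1 h2)
        rw [QuadraticMap.polar_add_left, QuadraticMap.polar_add_right,
          QuadraticMap.polar_add_right, h w1 h1, h w2 h2] at hs
        have h21 : QuadraticMap.polar Q w2 w1 = QuadraticMap.polar Q w1 w2 :=
          QuadraticMap.polar_comm _ _ _
        rw [h21] at hs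
        have : (2 : F) * QuadraticMap.polar Q w1 w2 = 0 := by linear_combination hs
        rcases mul_eq_zero.mp this with h' | h'
        · exact absurd h' hchar
        · exact h'
      have hbot : LinearMap.BilinForm.orthogonal Q.polarBilin U1 = ⊥ := by
        rw [eq_bot_iff]
        intro x hx
        have : x = 0 := by
          refine hQ x (fun v => ?_)
          have hv : v ∈ U1 ⊔ LinearMap.BilinForm.orthogonal Q.polarBilin U1 := hsup ▸ Submodule.mem_top
          obtain ⟨a, ha, b, hb, rfl⟩ := Submodule.mem_sup.mp hv
          rw [QuadraticMap.polar_add_right]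
          have h1 : QuadraticMap.polar Q x a = 0 := by
            rw [QuadraticMap.polar_comm]; exact hx a ha
          rw [h1, horth x hx b hb, add_zero]
        simp [this]
      rw [hbot, sup_bot_eq] at hsup
      haveI : FiniteDimensional F (⊤ : Submodule F V) := hsup ▸ hU1fin
      exact hV (Submodule.topEquiv (R := F) (M := V)).finiteDimensional
    obtain ⟨w, hworth, hww⟩ := hex
    have hwU1 : w ∉ U1 := by
      intro hwU
      exact hww ((fun h => h) (by rw [QuadraticMap.polar_comm]; exact hworth w hwU))
    have hwne : w ≠ 0 := by
      intro h; apply hww; rw [h]; simp [QuadraticMap.polar]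
    set U' : Submodule F V := U1 ⊔ (F ∙ w) with hU'
    haveI : FiniteDimensional F U' := Submodule.finiteDimensional_sup _ _
    have hinf : U1 ⊓ (F ∙ w) = ⊥ := by
      rw [eq_bot_iff]
      rintro x ⟨hx1, hx2⟩
      obtain ⟨c, rfl⟩ := Submodule.mem_span_singleton.mp hx2
      rcases eq_or_ne c 0 with rfl | hc
      · simp
      · exact absurd ((Submodule.smul_mem_iff _ hc).mp hx1) hwU1
    have hrank : finrank F U' = finrank F U1 + 1 := by
      have := Submodule.finrank_sup_add_finrank_inf_eq U1 (F ∙ w)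
      rw [hinf, finrank_bot, add_zero, finrank_span_singleton hwne] at this
      exact this
    refine ⟨U', le_trans hUU1 le_sup_left, inferInstance, ?_, ?_⟩
    · rw [hrank]
      exact Odd.add_one (Nat.not_even_iff_odd.mp he)
    · intro x hx hxall
      obtain ⟨y, hy, z, hz, rfl⟩ := Submodule.mem_sup.mp hx
      obtain ⟨c, rfl⟩ := Submodule.mem_span_singleton.mp hz
      have hxw : QuadraticMap.polar Q (y + c • w) w = 0 :=
        hxall w (Submodule.mem_sup_right (Submodule.mem_span_singleton_self w))
      have hyw : QuadraticMap.polar Q y w = 0 := hworth y hy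
      rw [QuadraticMap.polar_add_left, hyw, QuadraticMap.polar_smul_left, zero_add,
        smul_eq_mul] at hxw
      have hc : c = 0 := by
        rcases mul_eq_zero.mp hxw with h' | h'
        · exact h'
        · exact absurd h' hww
      have hx' : y + c • w = y := by rw [hc, zero_smul, add_zero]
      rw [hx'] at hxall ⊢
      refine hU1nd y hy (fun v hv => hxall v (Submodule.mem_sup_left hv))

end Aux

/-- Every element of the Clifford algebra of an infinite-dimensional vector space
with a nondegenerate quadratic form lies in the unital subalgebra generated by
`ι(V')` for some finite-dimensional, even-dimensional, nondegenerate subspace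
`V' ⊆ V`. -/
theorem mem_adjoin_of_even_nondeg_subspace
    {F V : Type*} [Field F] [AddCommGroup V] [Module F V]
    (hchar : (2 : F) ≠ 0) (hV : ¬ FiniteDimensional F V)
    (Q : QuadraticForm F V)
    (hQ : ∀ v : V, (∀ w : V, QuadraticMap.polar Q v w = 0) → v = 0) :
    ∀ x : CliffordAlgebra Q, ∃ V' : Submodule F V,
      FiniteDimensional F V' ∧ Even (Module.finrank F V') ∧
      (∀ u ∈ V', (∀ w ∈ V', QuadraticMap.polar Q u w = 0) → u = 0) ∧
      x ∈ Algebra.adjoin F (CliffordAlgebra.ι Q '' (V' : Set V)) := by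
  intro x
  -- first: x lies in the subalgebra generated by a finite-dimensional subspace
  have step1 : ∃ U : Submodule F V, FiniteDimensional F U ∧
      x ∈ Algebra.adjoin F (CliffordAlgebra.ι Q '' (U : Set V)) := by
    induction x using CliffordAlgebra.induction with
    | algebraMap r =>
      exact ⟨⊥, inferInstance, Subalgebra.algebraMap_mem _ r⟩
    | ι v =>
      refine ⟨F ∙ v, inferInstance, Algebra.subset_adjoin ?_⟩
      exact ⟨v, Submodule.mem_span_singleton_self v, rfl⟩
    | mul a b ha hb =>
      obtain ⟨U1, hU1, ha1⟩ := ha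
      obtain ⟨U2, hU2, hb2⟩ := hb
      haveI := hU1; haveI := hU2
      refine ⟨U1 ⊔ U2, inferInstance, mul_mem ?_ ?_⟩
      · exact Algebra.adjoin_mono (Set.image_mono (SetLike.coe_subset_coe.mpr le_sup_left)) ha1
      · exact Algebra.adjoin_mono (Set.image_mono (SetLike.coe_subset_coe.mpr le_sup_right)) hb2
    | add a b ha hb =>
      obtain ⟨U1, hU1, ha1⟩ := ha
      obtain ⟨U2, hU2, hb2⟩ := hb
      haveI := hU1; haveI := hU2
      refine ⟨U1 ⊔ U2, inferInstance, add_mem ?_ ?_⟩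
      · exact Algebra.adjoin_mono (Set.image_mono (SetLike.coe_subset_coe.mpr le_sup_left)) ha1
      · exact Algebra.adjoin_mono (Set.image_mono (SetLike.coe_subset_coe.mpr le_sup_right)) hb2
  obtain ⟨U, hU, hxU⟩ := step1
  obtain ⟨U', hUU', hU'fin, hU'even, hU'nd⟩ := extend_even_nondeg hchar hV Q hQ U hU
  exact ⟨U', hU'fin, hU'even, hU'nd,
    Algebra.adjoin_mono (Set.image_mono (SetLike.coe_subset_coe.mpr hUU')) hxU⟩
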